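/- There exists a constant c > 0 such that for every sufficiently large positive integer n there is a bipartite simple graph G with parts S and T of size n each (all edges of G join a vertex of S to a vertex of T), such that G contains no copy of K_{3,3} (i.e., there are no three vertices in S and three vertices in T that are pairwise joined by edges of G), and the number of edges of G is greater than c·n^{5/3}. -/

import Mathlib

namespace Brown
variable {F : Type*} [Field F]

def dot3 (u v : F × F × F) : F := u.1*v.1 + u.2.1*v.2.1 + u.2.2*v.2.2
def q3 (u : F × F × F) : F := dot3 u u
def sub3 (u v : F × F × F) : F × F × F := (u.1 - v.1, u.2.1 - v.2.1, u.2.2 - v.2.2)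
def cross3 (u v : F × F × F) : F × F × F :=
  (u.2.1*v.2.2 - u.2.2*v.2.1, u.2.2*v.1 - u.1*v.2.2, u.1*v.2.1 - u.2.1*v.1)

lemma sub3_eq_zero {u v : F × F × F} : sub3 u v = 0 ↔ u = v := by
  obtain ⟨a,b,c⟩ := u; obtain ⟨d,e,f⟩ := v
  simp [sub3, Prod.ext_iff, sub_eq_zero]

/-- Lemma A : orthogonal to a nonzero isotropic vector implies -Q is a square -/
lemma lemA {w z : F × F × F} (hw : w ≠ 0) (hq : q3 w = 0) (hd : dot3 z w = 0) :
    IsSquare (-(q3 z)) := by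
  obtain ⟨p, q, r⟩ := w; obtain ⟨z1, z2, z3⟩ := z
  simp only [q3, dot3, sub3] at hq hd ⊢
  by_cases hr : r ≠ 0
  · refine ⟨(z1*q - z2*p)/r, ?_⟩
    rw [div_mul_div_comm, eq_div_iff (mul_ne_zero hr hr)]
    linear_combination (-(z1^2+z2^2)) * hq + (z1*p + z2*q - z3*r) * hd
  · push_neg at hr; subst hr
    by_cases hqq : q ≠ 0
    · refine ⟨p*z3/q, ?_⟩
      rw [div_mul_div_comm, eq_div_iff (mul_ne_zero hqq hqq)]
      linear_combination (-(z1^2+z3^2)) * hq + (z1*p - z2*q) * hd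
    · push_neg at hqq; subst hqq
      exfalso
      have hp : p ≠ 0 := by
        intro h; exact hw (by simp [h, Prod.ext_iff])
      apply hp
      have : p^2 = 0 := by linear_combination hq
      exact pow_eq_zero_iff (n := 2) (by norm_num) |>.mp this

/-- cross product zero with nonzero first arg implies parallel -/
lemma lemL {u v : F × F × F} (hu : u ≠ 0) (h : cross3 u v = 0) :
    ∃ μ : F, v = μ • u := by
  obtain ⟨p, q, r⟩ := u; obtain ⟨a, b, c⟩ := v
  simp only [cross3, Prod.ext_iff, Prod.fst_zero, Prod.snd_zero] at h
  obtain ⟨h1, h2, h3⟩ := h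
  simp only [Prod.smul_def, smul_eq_mul, Prod.mk.injEq, Prod.ext_iff]
  by_cases hp : p ≠ 0
  · refine ⟨a/p, by field_simp, ?_, ?_⟩
    · rw [div_mul_eq_mul_div, eq_div_iff hp]; linear_combination h3
    · rw [div_mul_eq_mul_div, eq_div_iff hp]; linear_combination -h2
  · push_neg at hp; subst hp
    by_cases hq : q ≠ 0
    · have ha : a = 0 := by
        have : q * a = 0 := by linear_combination -h3
        exact (mul_eq_zero.mp this).resolve_left hq
      refine ⟨b/q, by simp [ha], by field_simp, ?_⟩
      rw [div_mul_eq_mul_div, eq_div_iff hq]; linear_combination h1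
    · push_neg at hq; subst hq
      have hr : r ≠ 0 := by intro h; exact hu (by simp [h, Prod.ext_iff])
      have ha : a = 0 := by
        have : r * a = 0 := by linear_combination h2
        exact (mul_eq_zero.mp this).resolve_left hr
      have hb : b = 0 := by
        have : r * b = 0 := by linear_combination -h1
        exact (mul_eq_zero.mp this).resolve_left hr
      exact ⟨c/r, by simp [ha], by simp [hb], by field_simp⟩



lemma sub3_eq_iff {u v d : F × F × F} : sub3 u v = d ↔ u = v + d := by
  obtain ⟨a,b,c⟩ := u; obtain ⟨e,f,g⟩ := v; obtain ⟨i,j,k⟩ := d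
  simp only [sub3, Prod.ext_iff, Prod.mk.injEq, Prod.fst_add, Prod.snd_add]
  constructor <;> rintro ⟨h1,h2,h3⟩ <;>
    exact ⟨by linear_combination h1, by linear_combination h2, by linear_combination h3⟩

lemma sub3_right_inj {u v w : F × F × F} (h : sub3 u w = sub3 v w) : u = v := by
  obtain ⟨a,b,c⟩ := u; obtain ⟨e,f,g⟩ := v; obtain ⟨i,j,k⟩ := w
  simp only [sub3, Prod.ext_iff, Prod.mk.injEq] at h ⊢
  obtain ⟨h1,h2,h3⟩ := h
  exact ⟨by linear_combination h1, by linear_combination h2, by linear_combination h3⟩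

lemma dot3_smul_right (μ : F) (u v : F × F × F) : dot3 u (μ • v) = μ * dot3 u v := by
  simp only [dot3, Prod.smul_fst, Prod.smul_snd, smul_eq_mul]; ring

lemma q3_smul (μ : F) (v : F × F × F) : q3 (μ • v) = μ^2 * q3 v := by
  simp only [q3, dot3, Prod.smul_fst, Prod.smul_snd, smul_eq_mul]; ring

lemma perp (h2 : (2:F) ≠ 0) {δ : F} {u u' p p' : F × F × F}
    (e1 : q3 (sub3 u p) = δ) (e2 : q3 (sub3 u' p) = δ)
    (e3 : q3 (sub3 u p') = δ) (e4 : q3 (sub3 u' p') = δ) :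
    dot3 (sub3 u' u) (sub3 p' p) = 0 := by
  have h : 2 * dot3 (sub3 u' u) (sub3 p' p) = 0 := by
    simp only [q3, dot3, sub3] at *
    linear_combination (e2 - e1) - (e4 - e3)
  exact (mul_eq_zero.mp h).resolve_left h2

lemma lemT {B C w : F × F × F} (hb : dot3 w B = 0) (hc : dot3 w C = 0) :
    cross3 (cross3 B C) w = 0 := by
  obtain ⟨b1,b2,b3⟩ := B; obtain ⟨c1,c2,c3⟩ := C; obtain ⟨w1,w2,w3⟩ := w
  simp only [dot3] at hb hc
  simp only [cross3, Prod.ext_iff, Prod.mk.injEq, Prod.fst_zero, Prod.snd_zero]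
  refine ⟨by linear_combination c1 * hb - b1 * hc, by linear_combination c2 * hb - b2 * hc,
    by linear_combination c3 * hb - b3 * hc⟩

lemma key (h2 : (2:F) ≠ 0) {δ : F} (hδ : ¬ IsSquare (-δ)) {a x n : F × F × F} {α β : F}
    (hn : n ≠ 0) (hα0 : α ≠ 0) (hβ0 : β ≠ 0) (hαβ : α ≠ β)
    (hx : q3 (sub3 x a) = δ)
    (hy : q3 (sub3 (x + α • n) a) = δ)
    (hz : q3 (sub3 (x + β • n) a) = δ) : False := by
  have e1 : α * (2 * dot3 (sub3 x a) n + α * q3 n) = 0 := by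
    simp only [q3, dot3, sub3, Prod.fst_add, Prod.snd_add, Prod.smul_fst, Prod.smul_snd,
      smul_eq_mul] at *
    linear_combination hy - hx
  have e2 : β * (2 * dot3 (sub3 x a) n + β * q3 n) = 0 := by
    simp only [q3, dot3, sub3, Prod.fst_add, Prod.snd_add, Prod.smul_fst, Prod.smul_snd,
      smul_eq_mul] at *
    linear_combination hz - hx
  have s1 : 2 * dot3 (sub3 x a) n + α * q3 n = 0 := (mul_eq_zero.mp e1).resolve_left hα0
  have s2 : 2 * dot3 (sub3 x a) n + β * q3 n = 0 := (mul_eq_zero.mp e2).resolve_left hβ0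
  have qn : q3 n = 0 := by
    have h : (α - β) * q3 n = 0 := by linear_combination s1 - s2
    exact (mul_eq_zero.mp h).resolve_left (sub_ne_zero.mpr hαβ)
  have hdot : dot3 (sub3 x a) n = 0 := by
    have h : 2 * dot3 (sub3 x a) n = 0 := by linear_combination s1 - α * qn
    exact (mul_eq_zero.mp h).resolve_left h2
  exact hδ (hx ▸ lemA hn qn hdot)

theorem brown_core (h2 : (2:F) ≠ 0) {δ : F} (hδ : ¬ IsSquare (-δ))
    {a b c x y z : F × F × F}
    (hab : a ≠ b) (hac : a ≠ c) (hbc : b ≠ c)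
    (hxy : x ≠ y) (hxz : x ≠ z) (hyz : y ≠ z)
    (hxa : q3 (sub3 x a) = δ) (hxb : q3 (sub3 x b) = δ) (hxc : q3 (sub3 x c) = δ)
    (hya : q3 (sub3 y a) = δ) (hyb : q3 (sub3 y b) = δ) (hyc : q3 (sub3 y c) = δ)
    (hza : q3 (sub3 z a) = δ) (hzb : q3 (sub3 z b) = δ) (hzc : q3 (sub3 z c) = δ) :
    False := by
  have hB : sub3 b a ≠ 0 := fun h => hab (sub3_eq_zero.mp h).symm
  by_cases hcol : ∃ μ : F, sub3 c a = μ • sub3 b a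
  · obtain ⟨μ, hμ⟩ := hcol
    have hμ0 : μ ≠ 0 := by
      rintro rfl; rw [zero_smul] at hμ; exact hac (sub3_eq_zero.mp hμ).symm
    have hμ1 : μ ≠ 1 := by
      rintro rfl; rw [one_smul] at hμ
      exact hbc (sub3_right_inj hμ).symm
    have e1 : 2 * dot3 (sub3 x a) (sub3 b a) = q3 (sub3 b a) := by
      simp only [q3, dot3, sub3] at *
      linear_combination hxa - hxb
    have e2 : 2 * dot3 (sub3 x a) (sub3 c a) = q3 (sub3 c a) := by
      simp only [q3, dot3, sub3] at *
      linear_combination hxa - hxc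
    rw [hμ, dot3_smul_right, q3_smul] at e2
    have h3 : μ * ((1 - μ) * q3 (sub3 b a)) = 0 := by linear_combination e2 - μ * e1
    have qB : q3 (sub3 b a) = 0 := by
      have := (mul_eq_zero.mp h3).resolve_left hμ0
      exact (mul_eq_zero.mp this).resolve_left (sub_ne_zero.mpr (Ne.symm hμ1))
    have dB : dot3 (sub3 x a) (sub3 b a) = 0 := by
      have h : 2 * dot3 (sub3 x a) (sub3 b a) = 0 := by linear_combination e1 + qB
      exact (mul_eq_zero.mp h).resolve_left h2
    exact hδ (hxa ▸ lemA hB qB dB)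
  · have hn : cross3 (sub3 b a) (sub3 c a) ≠ 0 := fun h => hcol (lemL hB h)
    have w1 : dot3 (sub3 y x) (sub3 b a) = 0 := by
      have := perp h2 hxa hya hxb hyb; simpa [sub3] using this
    have w2 : dot3 (sub3 y x) (sub3 c a) = 0 := by
      have := perp h2 hxa hya hxc hyc; simpa [sub3] using this
    have w1' : dot3 (sub3 z x) (sub3 b a) = 0 := by
      have := perp h2 hxa hza hxb hzb; simpa [sub3] using this
    have w2' : dot3 (sub3 z x) (sub3 c a) = 0 := by
      have := perp h2 hxa hza hxc hzc; simpa [sub3] using this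
    obtain ⟨α, hα⟩ := lemL hn (lemT w1 w2)
    obtain ⟨β, hβ⟩ := lemL hn (lemT w1' w2')
    have hα0 : α ≠ 0 := by
      rintro rfl; rw [zero_smul] at hα; exact hxy (sub3_eq_zero.mp hα).symm
    have hβ0 : β ≠ 0 := by
      rintro rfl; rw [zero_smul] at hβ; exact hxz (sub3_eq_zero.mp hβ).symm
    have hαβ : α ≠ β := by
      rintro rfl
      exact hyz (sub3_right_inj (hα.trans hβ.symm))
    have hy' : y = x + α • cross3 (sub3 b a) (sub3 c a) := sub3_eq_iff.mp hα
    have hz' : z = x + β • cross3 (sub3 b a) (sub3 c a) := sub3_eq_iff.mp hβ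
    exact key h2 hδ hn hα0 hβ0 hαβ hxa (hy' ▸ hya) (hz' ▸ hza)


section Counting
open Finset

variable {p : ℕ} [Fact p.Prime]

/-- number of representations as sum of two squares -/
def m2 (t : ZMod p) : ℕ := (univ.filter fun ab : ZMod p × ZMod p => ab.1^2 + ab.2^2 = t).card

lemma m2_le {t s : ZMod p} (ht : t ≠ 0) (hs : s ≠ 0) : m2 t ≤ m2 s := by
  set r : ZMod p := s * t⁻¹ with hrdef
  have hr : r ≠ 0 := mul_ne_zero hs (inv_ne_zero ht)
  have htr : t * r = s := by rw [hrdef, mul_comm s, ← mul_assoc, mul_inv_cancel₀ ht, one_mul]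
  obtain ⟨c, d, hc⟩ := ZMod.sq_add_sq p r
  apply Finset.card_le_card_of_injOn (fun ab => (ab.1*c - ab.2*d, ab.1*d + ab.2*c))
  · rintro ⟨a, b⟩ hab
    simp only [Finset.coe_filter, Set.mem_setOf_eq, mem_filter, mem_univ, true_and] at hab ⊢
    calc (a*c - b*d)^2 + (a*d + b*c)^2 = t * r := by
          linear_combination (c^2 + d^2) * hab + t * hc
      _ = s := htr
  · rintro ⟨a, b⟩ _ ⟨a2, b2⟩ _ heq
    simp only [Prod.mk.injEq] at heq ⊢
    obtain ⟨E1, E2⟩ := heq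
    have ha : (a - a2) * r = 0 := by linear_combination c * E1 + d * E2 - (a - a2) * hc
    have ha' : a = a2 := by
      have := (mul_eq_zero.mp ha).resolve_right hr
      linear_combination this
    subst ha'
    have hb : (b - b2) * r = 0 := by linear_combination (-d) * E1 + c * E2 - (b - b2) * hc
    have hb' : b = b2 := by
      have := (mul_eq_zero.mp hb).resolve_right hr
      linear_combination this
    exact ⟨rfl, hb'⟩

lemma m2_eq {t s : ZMod p} (ht : t ≠ 0) (hs : s ≠ 0) : m2 t = m2 s :=
  le_antisymm (m2_le ht hs) (m2_le hs ht)

lemma m2_zero_le : (m2 (p := p) 0) ≤ 2 * p := by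
  have h := Finset.card_le_mul_card_image
    (f := fun ab : ZMod p × ZMod p => ab.1)
    (s := univ.filter fun ab : ZMod p × ZMod p => ab.1^2 + ab.2^2 = 0) (n := 2) ?_
  · refine le_trans h ?_
    have : ((univ.filter fun ab : ZMod p × ZMod p => ab.1^2 + ab.2^2 = 0).image
        (fun ab => ab.1)).card ≤ p := by
      refine le_trans (Finset.card_le_card (Finset.subset_univ _)) ?_
      simp [ZMod.card]
    omega
  · intro a _
    by_cases hne : ((univ.filter fun ab : ZMod p × ZMod p => ab.1^2 + ab.2^2 = 0).filter
        fun x => x.1 = a).Nonempty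
    · obtain ⟨⟨a0, b0⟩, hmem⟩ := hne
      simp only [mem_filter, mem_univ, true_and] at hmem
      obtain ⟨hq, ha0⟩ := hmem
      subst ha0
      have hsub : ((univ.filter fun ab : ZMod p × ZMod p => ab.1^2 + ab.2^2 = 0).filter
          fun x => x.1 = a0) ⊆ ({(a0, b0), (a0, -b0)} : Finset (ZMod p × ZMod p)) := by
        rintro ⟨x, y⟩ hxy
        simp only [mem_filter, mem_univ, true_and] at hxy
        obtain ⟨hq2, hx⟩ := hxy
        subst hx
        have : (y - b0) * (y + b0) = 0 := by linear_combination hq2 - hq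
        rcases mul_eq_zero.mp this with h | h
        · simp [sub_eq_zero.mp h]
        · have : y = -b0 := by linear_combination h
          simp [this]
      exact le_trans (Finset.card_le_card hsub)
        (le_trans (Finset.card_insert_le _ _) (by simp))
    · rw [Finset.not_nonempty_iff_eq_empty] at hne
      simp [hne]

lemma m2_sum : ∑ t : ZMod p, m2 t = p ^ 2 := by
  have h := Finset.card_eq_sum_card_fiberwise
    (f := fun ab : ZMod p × ZMod p => ab.1^2 + ab.2^2)
    (s := univ) (t := univ) (fun x _ => mem_univ _)
  have hcard : (univ : Finset (ZMod p × ZMod p)).card = p ^ 2 := by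
    simp [ZMod.card, sq]
  rw [hcard] at h
  simpa [m2] using h.symm

lemma m2_ge {t : ZMod p} (ht : t ≠ 0) (hp : 2 ≤ p) : p - 2 ≤ m2 t := by
  have hsum : ∑ s : ZMod p, m2 s = p ^ 2 := m2_sum
  have hsplit : ∑ s : ZMod p, m2 s = m2 (0 : ZMod p) + ∑ s ∈ (univ : Finset (ZMod p)).erase 0, m2 s := by
    rw [← Finset.sum_erase_add _ _ (mem_univ (0 : ZMod p))]; ring
  have hconst : ∑ s ∈ (univ : Finset (ZMod p)).erase 0, m2 s = (p - 1) * m2 t := by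
    rw [Finset.sum_congr rfl (fun s hs => m2_eq (Finset.ne_of_mem_erase hs) ht)]
    simp [Finset.card_erase_of_mem, Finset.card_univ, ZMod.card, mul_comm]
  have h0 : m2 (p := p) 0 ≤ 2 * p := m2_zero_le
  have key : p ^ 2 ≤ 2 * p + (p - 1) * m2 t := by
    rw [← hsum, hsplit, hconst] at *; omega
  obtain ⟨k, rfl⟩ := Nat.exists_eq_add_of_le hp
  have e1 : 2 + k - 1 = k + 1 := by omega
  rw [e1] at key
  have e2 : 2 + k - 2 = k := by omega
  rw [e2]
  by_contra hlt
  push_neg at hlt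
  have h3 : (k + 1) * (m2 t + 1) ≤ (k + 1) * k := Nat.mul_le_mul_left _ (by omega)
  nlinarith [key, h3]


lemma sub3_sub3 {F : Type*} [Field F] (x v : F × F × F) : sub3 x (sub3 x v) = v := by
  obtain ⟨a,b,c⟩ := x; obtain ⟨d,e,f⟩ := v
  simp [sub3, Prod.ext_iff]

lemma sub3_left_cancel {F : Type*} [Field F] {x v w : F × F × F}
    (h : sub3 x v = sub3 x w) : v = w := by
  obtain ⟨a,b,c⟩ := x; obtain ⟨d,e,f⟩ := v; obtain ⟨g,i,j⟩ := w
  simp only [sub3, Prod.ext_iff, Prod.mk.injEq] at h ⊢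
  obtain ⟨h1,h2,h3⟩ := h
  exact ⟨by linear_combination -h1, by linear_combination -h2, by linear_combination -h3⟩

/-- the sphere of radius δ -/
def sphere (p : ℕ) [Fact p.Prime] (δ : ZMod p) : Finset (ZMod p × ZMod p × ZMod p) :=
  univ.filter fun v => q3 v = δ

lemma sphere_card_ge {δ : ZMod p} (hδ : δ ≠ 0) (hp : 2 ≤ p) :
    (p - 2) * (p - 2) ≤ (sphere p δ).card := by
  have hfib := Finset.card_eq_sum_card_fiberwise
    (f := fun v : ZMod p × ZMod p × ZMod p => v.2.2) (s := sphere p δ) (t := univ)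
    (fun x _ => mem_univ _)
  have hfibcard : ∀ c : ZMod p,
      ((sphere p δ).filter fun v => v.2.2 = c).card = m2 (δ - c^2) := by
    intro c
    refine Finset.card_bij' (fun v _ => (v.1, v.2.1)) (fun ab _ => (ab.1, ab.2, c)) ?_ ?_ ?_ ?_
    · rintro ⟨a, b, c'⟩ hv
      simp only [sphere, q3, dot3, mem_filter, mem_univ, true_and] at hv
      obtain ⟨hq, hc⟩ := hv
      subst hc
      simp only [m2, mem_filter, mem_univ, true_and]
      have hq' := (Finset.mem_filter.mp hq).2
      linear_combination hq'
    · rintro ⟨a, b⟩ hab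
      simp only [m2, mem_filter, mem_univ, true_and] at hab
      simp only [sphere, q3, dot3, mem_filter, mem_univ, true_and]
      exact ⟨Finset.mem_filter.mpr ⟨mem_univ _, by linear_combination hab⟩, trivial⟩
    · rintro ⟨a, b, c'⟩ hv
      simp only [sphere, mem_filter] at hv
      simp [hv.2]
    · rintro ⟨a, b⟩ _
      rfl
  -- the set of good c values
  have hbad : ((univ : Finset (ZMod p)).filter fun c => δ - c^2 = 0).card ≤ 2 := by
    by_cases hne : ((univ : Finset (ZMod p)).filter fun c => δ - c^2 = 0).Nonempty
    · obtain ⟨c0, hc0⟩ := hne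
      simp only [mem_filter, mem_univ, true_and] at hc0
      have hsub : ((univ : Finset (ZMod p)).filter fun c => δ - c^2 = 0) ⊆ {c0, -c0} := by
        intro c hc
        simp only [mem_filter, mem_univ, true_and] at hc
        have : (c - c0) * (c + c0) = 0 := by linear_combination hc0 - hc
        rcases mul_eq_zero.mp this with h | h
        · simp [sub_eq_zero.mp h]
        · have : c = -c0 := by linear_combination h
          simp [this]
      exact le_trans (Finset.card_le_card hsub)
        (le_trans (Finset.card_insert_le _ _) (by simp))
    · rw [Finset.not_nonempty_iff_eq_empty] at hne
      simp [hne]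
  have hgood : p - 2 ≤ ((univ : Finset (ZMod p)).filter fun c => δ - c^2 ≠ 0).card := by
    have := Finset.card_filter_add_card_filter_not
      (s := (univ : Finset (ZMod p))) (p := fun c => δ - c^2 = 0)
    have hu : (univ : Finset (ZMod p)).card = p := by simp [ZMod.card]
    simp only [ne_eq]
    omega
  rw [hfib]
  calc (p - 2) * (p - 2)
      ≤ ((univ : Finset (ZMod p)).filter fun c => δ - c^2 ≠ 0).card * (p - 2) :=
        Nat.mul_le_mul_right _ hgood
    _ = ∑ c ∈ (univ : Finset (ZMod p)).filter fun c => δ - c^2 ≠ 0, (p - 2) := by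
        rw [Finset.sum_const, smul_eq_mul]
    _ ≤ ∑ c ∈ (univ : Finset (ZMod p)).filter fun c => δ - c^2 ≠ 0,
          ((sphere p δ).filter fun v => v.2.2 = c).card := by
        apply Finset.sum_le_sum
        intro c hc
        simp only [mem_filter, mem_univ, true_and] at hc
        rw [hfibcard c]
        exact m2_ge hc hp
    _ ≤ ∑ c : ZMod p, ((sphere p δ).filter fun v => v.2.2 = c).card :=
        Finset.sum_le_sum_of_subset (Finset.filter_subset _ _)

end Counting


section Graph
open Finset

lemma graph_exists (q n : ℕ) [Fact q.Prime] (hq8 : 8 ≤ q) (hqn : q^3 ≤ n) :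
    ∃ G : SimpleGraph (Fin n ⊕ Fin n),
      (∀ u v, G.Adj u v → (u.isLeft ∧ v.isRight) ∨ (u.isRight ∧ v.isLeft)) ∧
      (¬ ∃ u1 u2 u3 v1 v2 v3 : Fin n,
        u1 ≠ u2 ∧ u1 ≠ u3 ∧ u2 ≠ u3 ∧ v1 ≠ v2 ∧ v1 ≠ v3 ∧ v2 ≠ v3 ∧
        ∀ u ∈ ({u1, u2, u3} : Set (Fin n)), ∀ v ∈ ({v1, v2, v3} : Set (Fin n)),
          G.Adj (Sum.inl u) (Sum.inr v)) ∧
      q^3 * ((q-2)*(q-2)) ≤ G.edgeSet.ncard := by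
  have hqp : Nat.Prime q := Fact.out
  have h2 : (2 : ZMod q) ≠ 0 := by
    have : ((2:ℕ) : ZMod q) ≠ 0 := by
      rw [Ne, ZMod.natCast_eq_zero_iff]
      intro hdvd
      have := Nat.le_of_dvd (by norm_num) hdvd
      omega
    simpa using this
  obtain ⟨sns, hsns⟩ := FiniteField.exists_nonsquare (F := ZMod q)
    (by rw [ZMod.ringChar_zmod_n]; omega)
  set δ : ZMod q := -sns with hδdef
  have hδ : ¬ IsSquare (-δ) := by rwa [hδdef, neg_neg]
  have hδ0 : δ ≠ 0 := by
    intro h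
    exact hδ (by rw [h, neg_zero]; exact ⟨0, by simp⟩)
  have hcard : Fintype.card (ZMod q × ZMod q × ZMod q) = q^3 := by
    simp [ZMod.card]; ring
  set e : (ZMod q × ZMod q × ZMod q) ≃ Fin (q^3) := Fintype.equivFinOfCardEq hcard with he
  set lift : (ZMod q × ZMod q × ZMod q) → Fin n := fun v => Fin.castLE hqn (e v) with hliftdef
  have hinj : Function.Injective lift := by
    intro a b h
    apply e.injective
    exact Fin.val_injective (by simpa [hliftdef, Fin.castLE] using congrArg Fin.val h)
  set r : (Fin n ⊕ Fin n) → (Fin n ⊕ Fin n) → Prop := fun u v =>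
    ∃ x y : ZMod q × ZMod q × ZMod q,
      u = Sum.inl (lift x) ∧ v = Sum.inr (lift y) ∧ q3 (sub3 x y) = δ with hrdef
  refine ⟨SimpleGraph.fromRel r, ?_, ?_, ?_⟩
  · intro u v h
    rw [SimpleGraph.fromRel_adj] at h
    rcases h.2 with ⟨x, y, hu, hv, _⟩ | ⟨x, y, hu, hv, _⟩
    · subst hu; subst hv; simp
    · subst hu; subst hv; simp
  · have hAdj : ∀ i j : Fin n, (SimpleGraph.fromRel r).Adj (Sum.inl i) (Sum.inr j) →
        ∃ x y, lift x = i ∧ lift y = j ∧ q3 (sub3 x y) = δ := by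
      intro i j h
      rw [SimpleGraph.fromRel_adj] at h
      rcases h.2 with ⟨x, y, hu, hv, hxy⟩ | ⟨x, y, hu, hv, hxy⟩
      · exact ⟨x, y, (Sum.inl.inj hu).symm, (Sum.inr.inj hv).symm, hxy⟩
      · exact absurd hu (by simp)
    rintro ⟨u1, u2, u3, v1, v2, v3, h12, h13, h23, g12, g13, g23, hadj⟩
    obtain ⟨x1, y1, hx1, hy1, e11⟩ := hAdj u1 v1 (hadj u1 (by simp) v1 (by simp))
    obtain ⟨x1', y2, hx1', hy2, e12⟩ := hAdj u1 v2 (hadj u1 (by simp) v2 (by simp))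
    obtain ⟨x1'', y3, hx1'', hy3, e13⟩ := hAdj u1 v3 (hadj u1 (by simp) v3 (by simp))
    obtain ⟨x2, y1', hx2, hy1', e21⟩ := hAdj u2 v1 (hadj u2 (by simp) v1 (by simp))
    obtain ⟨x2', y2', hx2', hy2', e22⟩ := hAdj u2 v2 (hadj u2 (by simp) v2 (by simp))
    obtain ⟨x2'', y3', hx2'', hy3', e23⟩ := hAdj u2 v3 (hadj u2 (by simp) v3 (by simp))
    obtain ⟨x3, y1'', hx3, hy1'', e31⟩ := hAdj u3 v1 (hadj u3 (by simp) v1 (by simp))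
    obtain ⟨x3', y2'', hx3', hy2'', e32⟩ := hAdj u3 v2 (hadj u3 (by simp) v2 (by simp))
    obtain ⟨x3'', y3'', hx3'', hy3'', e33⟩ := hAdj u3 v3 (hadj u3 (by simp) v3 (by simp))
    rw [hinj (hx1'.trans hx1.symm)] at e12
    rw [hinj (hx1''.trans hx1.symm)] at e13
    rw [hinj (hx2'.trans hx2.symm)] at e22
    rw [hinj (hx2''.trans hx2.symm)] at e23
    rw [hinj (hx3'.trans hx3.symm)] at e32
    rw [hinj (hx3''.trans hx3.symm)] at e33
    rw [hinj (hy1'.trans hy1.symm)] at e21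
    rw [hinj (hy1''.trans hy1.symm)] at e31
    rw [hinj (hy2'.trans hy2.symm)] at e22
    rw [hinj (hy2''.trans hy2.symm)] at e32
    rw [hinj (hy3'.trans hy3.symm)] at e23
    rw [hinj (hy3''.trans hy3.symm)] at e33
    have hY12 : y1 ≠ y2 := fun h => g12 (by rw [← hy1, ← hy2, h])
    have hY13 : y1 ≠ y3 := fun h => g13 (by rw [← hy1, ← hy3, h])
    have hY23 : y2 ≠ y3 := fun h => g23 (by rw [← hy2, ← hy3, h])
    have hX12 : x1 ≠ x2 := fun h => h12 (by rw [← hx1, ← hx2, h])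
    have hX13 : x1 ≠ x3 := fun h => h13 (by rw [← hx1, ← hx3, h])
    have hX23 : x2 ≠ x3 := fun h => h23 (by rw [← hx2, ← hx3, h])
    exact brown_core h2 hδ hY12 hY13 hY23 hX12 hX13 hX23
      e11 e12 e13 e21 e22 e23 e31 e32 e33
  · set S := (univ : Finset (ZMod q × ZMod q × ZMod q)) ×ˢ sphere q δ with hS
    set Φ : (ZMod q × ZMod q × ZMod q) × (ZMod q × ZMod q × ZMod q) → Sym2 (Fin n ⊕ Fin n) :=
      fun w => s(Sum.inl (lift w.1), Sum.inr (lift (sub3 w.1 w.2))) with hΦ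
    have hsub : Φ '' ↑S ⊆ (SimpleGraph.fromRel r).edgeSet := by
      rintro _ ⟨⟨x, v⟩, hmem, rfl⟩
      simp only [hS, Finset.coe_product, Set.mem_prod, Finset.mem_coe, sphere,
        Finset.mem_filter, Finset.mem_univ, true_and] at hmem
      rw [hΦ, SimpleGraph.mem_edgeSet, SimpleGraph.fromRel_adj]
      refine ⟨by simp, Or.inl ⟨x, sub3 x v, rfl, rfl, ?_⟩⟩
      rw [sub3_sub3]
      exact hmem
    have hinjOn : Set.InjOn Φ ↑S := by
      rintro ⟨x, v⟩ _ ⟨x', v'⟩ _ h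
      simp only [hΦ, Sym2.eq_iff] at h
      rcases h with ⟨h1, h2'⟩ | ⟨h1, h2'⟩
      · have hx : x = x' := hinj (Sum.inl.inj h1)
        subst hx
        have hv : v = v' := sub3_left_cancel (hinj (Sum.inr.inj h2'))
        rw [hv]
      · exact absurd h1 (by simp)
    have h1 : (Φ '' ↑S).ncard = S.card := by
      rw [Set.ncard_image_of_injOn hinjOn, Set.ncard_coe_finset]
    have h2' : (Φ '' ↑S).ncard ≤ (SimpleGraph.fromRel r).edgeSet.ncard :=
      Set.ncard_le_ncard hsub (Set.toFinite _)
    have hScard : S.card = q^3 * (sphere q δ).card := by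
      rw [hS, Finset.card_product, Finset.card_univ, hcard]
    have hsph : (q-2)*(q-2) ≤ (sphere q δ).card := sphere_card_ge hδ0 (by omega)
    calc q^3 * ((q-2)*(q-2)) ≤ q^3 * (sphere q δ).card := Nat.mul_le_mul_left _ hsph
      _ = S.card := hScard.symm
      _ = (Φ '' ↑S).ncard := h1.symm
      _ ≤ (SimpleGraph.fromRel r).edgeSet.ncard := h2'

end Graph

end Brown


open Finset Filter

theorem stmt_16 : ∃ c : ℝ, 0 < c ∧ ∀ᶠ n : ℕ in Filter.atTop,
    ∃ G : SimpleGraph (Fin n ⊕ Fin n),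
      (∀ u v, G.Adj u v → (u.isLeft ∧ v.isRight) ∨ (u.isRight ∧ v.isLeft)) ∧
      (¬ ∃ u1 u2 u3 v1 v2 v3 : Fin n,
        u1 ≠ u2 ∧ u1 ≠ u3 ∧ u2 ≠ u3 ∧ v1 ≠ v2 ∧ v1 ≠ v3 ∧ v2 ≠ v3 ∧
        ∀ u ∈ ({u1, u2, u3} : Set (Fin n)), ∀ v ∈ ({v1, v2, v3} : Set (Fin n)),
          G.Adj (Sum.inl u) (Sum.inr v)) ∧
      c * (n : ℝ) ^ ((5 : ℝ)/3) < (G.edgeSet.ncard : ℝ) := by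
  refine ⟨1/100, by norm_num, ?_⟩
  rw [Filter.eventually_atTop]
  refine ⟨3375, fun n hn => ?_⟩
  have hn0 : (0:ℝ) ≤ (n:ℝ) := Nat.cast_nonneg n
  set t : ℝ := (n:ℝ) ^ ((1:ℝ)/3) with htdef
  have ht0 : 0 ≤ t := Real.rpow_nonneg hn0 _
  have ht3 : t ^ (3:ℕ) = (n:ℝ) := by
    rw [htdef, ← Real.rpow_natCast ((n:ℝ) ^ ((1:ℝ)/3)) 3, ← Real.rpow_mul hn0]
    norm_num
  set m : ℕ := ⌊t⌋₊ with hmdef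
  have hm3 : m^3 ≤ n := by
    have h1 : (m:ℝ) ≤ t := Nat.floor_le ht0
    have h2 : ((m:ℝ))^(3:ℕ) ≤ t^(3:ℕ) := pow_le_pow_left₀ (Nat.cast_nonneg m) h1 3
    rw [ht3] at h2
    exact_mod_cast h2
  have hm1 : n < (m+1)^3 := by
    have h1 : t < (m:ℝ) + 1 := Nat.lt_floor_add_one t
    have h2 : t^(3:ℕ) < ((m:ℝ)+1)^(3:ℕ) := by
      apply pow_lt_pow_left₀ h1 ht0
      norm_num
    rw [ht3] at h2
    exact_mod_cast h2
  have hm15 : 15 ≤ m := by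
    by_contra hlt
    push_neg at hlt
    have : (m+1)^3 ≤ 15^3 := Nat.pow_le_pow_left (by omega) 3
    omega
  obtain ⟨q, hqp, hq1, hq2⟩ := Nat.exists_prime_lt_and_le_two_mul (m / 2) (by omega)
  haveI : Fact q.Prime := ⟨hqp⟩
  have hq8 : 8 ≤ q := by omega
  have hqn : q^3 ≤ n := le_trans (Nat.pow_le_pow_left (by omega) 3) hm3
  have hn8 : n < 8 * q^3 := by
    have h2q : m + 1 ≤ 2*q := by omega
    calc n < (m+1)^3 := hm1
      _ ≤ (2*q)^3 := Nat.pow_le_pow_left h2q 3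
      _ = 8 * q^3 := by ring
  obtain ⟨G, hbip, hfree, hedge⟩ := Brown.graph_exists q n hq8 hqn
  refine ⟨G, hbip, hfree, ?_⟩
  have hQ : (7:ℝ) ≤ (q:ℝ) := by exact_mod_cast (by omega : 7 ≤ q)
  have hq0 : (0:ℝ) < (q:ℝ) := by linarith
  have hcast : ((q^3 * ((q-2)*(q-2)) : ℕ) : ℝ) ≤ (G.edgeSet.ncard : ℝ) := Nat.cast_le.mpr hedge
  push_cast [Nat.cast_sub (show 2 ≤ q by omega)] at hcast
  have hmono : (n:ℝ) ^ ((5:ℝ)/3) ≤ ((8 * q^3 : ℕ):ℝ) ^ ((5:ℝ)/3) := by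
    apply Real.rpow_le_rpow hn0 _ (by norm_num)
    exact_mod_cast le_of_lt hn8
  have hval : ((8 * q^3 : ℕ):ℝ) ^ ((5:ℝ)/3) = 32 * (q:ℝ)^5 := by
    push_cast
    rw [show (8:ℝ) * (q:ℝ)^3 = (2*(q:ℝ))^(3:ℕ) by ring]
    rw [← Real.rpow_natCast (2*(q:ℝ)) 3, ← Real.rpow_mul (by positivity)]
    rw [show ((3:ℕ):ℝ) * ((5:ℝ)/3) = ((5:ℕ):ℝ) by push_cast; norm_num]
    rw [Real.rpow_natCast]
    ring
  rw [hval] at hmono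
  have h57 : (5/7)*(q:ℝ) ≤ (q:ℝ) - 2 := by linarith
  have hsq : ((5/7)*(q:ℝ))^2 ≤ ((q:ℝ)-2)^2 := by
    apply pow_le_pow_left₀ (by linarith) h57
  have hmid : (1/100) * (32 * (q:ℝ)^5) < (q:ℝ)^3 * (((q:ℝ)-2)*((q:ℝ)-2)) := by
    have h3 : (0:ℝ) < (q:ℝ)^3 := by positivity
    have h5 : (0:ℝ) < (q:ℝ)^5 := by positivity
    nlinarith [mul_le_mul_of_nonneg_left hsq (le_of_lt h3)]
  calc (1/100) * (n:ℝ)^((5:ℝ)/3) ≤ (1/100) * (32 * (q:ℝ)^5) := by linarith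
    _ < (q:ℝ)^3 * (((q:ℝ)-2)*((q:ℝ)-2)) := hmid
    _ ≤ (G.edgeSet.ncard : ℝ) := hcast
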